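/- Product of weighted Gaussian components: let n ≥ 1, let m_1, m_2 ∈ ℝ^n, let P_1, P_2 be symmetric positive definite real n×n matrices, and let α_1, α_2 > 0 be scalars. Define P_{12} := (P_1⁻¹ + P_2⁻¹)⁻¹, m_{12} := P_{12}(P_1⁻¹ m_1 + P_2⁻¹ m_2), and α_{12} := α_1 α_2 N(m_1 − m_2; 0, P_1 + P_2). Then P_{12} and P_1 + P_2 are symmetric positive definite and for every x ∈ ℝ^n, α_1 N(x; m_1, P_1) · α_2 N(x; m_2, P_2) = α_{12} N(x; m_{12}, P_{12}). -/

import Mathlib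

open Matrix

variable {n : ℕ}

lemma dp_symm {M : Matrix (Fin n) (Fin n) ℝ} (hM : Mᵀ = M) (u v : Fin n → ℝ) :
    u ⬝ᵥ M *ᵥ v = v ⬝ᵥ M *ᵥ u := by
  rw [dotProduct_mulVec, ← mulVec_transpose, hM, dotProduct_comm]

lemma mv_dp {M : Matrix (Fin n) (Fin n) ℝ} (hM : Mᵀ = M) (u v : Fin n → ℝ) :
    (M *ᵥ u) ⬝ᵥ v = u ⬝ᵥ M *ᵥ v := by
  rw [dotProduct_comm, dp_symm hM]

lemma quad_sub {M : Matrix (Fin n) (Fin n) ℝ} (hM : Mᵀ = M) (u v : Fin n → ℝ) :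
    (u - v) ⬝ᵥ M *ᵥ (u - v)
      = u ⬝ᵥ M *ᵥ u - 2 * (u ⬝ᵥ M *ᵥ v) + v ⬝ᵥ M *ᵥ v := by
  simp only [mulVec_sub, sub_dotProduct, dotProduct_sub]
  rw [dp_symm hM v u]; ring

lemma key0 (A B : Matrix (Fin n) (Fin n) ℝ) (hA : Aᵀ = A) (hB : Bᵀ = B)
    (hQ : IsUnit (A + B).det) (m₁ m₂ : Fin n → ℝ) :
    (A *ᵥ m₁ + B *ᵥ m₂) ⬝ᵥ (A + B)⁻¹ *ᵥ (A *ᵥ m₁ + B *ᵥ m₂)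
      + (m₁ - m₂) ⬝ᵥ (B * (A + B)⁻¹ * A) *ᵥ (m₁ - m₂)
      = m₁ ⬝ᵥ A *ᵥ m₁ + m₂ ⬝ᵥ B *ᵥ m₂ := by
  have hQQ : (A + B) * (A + B)⁻¹ = 1 := Matrix.mul_nonsing_inv _ hQ
  have hQQ' : (A + B)⁻¹ * (A + B) = 1 := Matrix.nonsing_inv_mul _ hQ
  have hQit : ((A + B)⁻¹)ᵀ = (A + B)⁻¹ := by
    rw [Matrix.transpose_nonsing_inv, transpose_add, hA, hB]
  have hAA : A * ((A + B)⁻¹ * A) + B * ((A + B)⁻¹ * A) = A := by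
    rw [← add_mul, ← mul_assoc, hQQ, one_mul]
  have hBB : B * ((A + B)⁻¹ * B) + B * ((A + B)⁻¹ * A) = B := by
    rw [← mul_add, ← mul_add, add_comm B A, hQQ', mul_one]
  have hx : A * ((A + B)⁻¹ * B) + B * ((A + B)⁻¹ * B) = B := by
    rw [← add_mul, ← mul_assoc, hQQ, one_mul]
  have hy : B * ((A + B)⁻¹ * A) + B * ((A + B)⁻¹ * B) = B := by
    rw [← mul_add, ← mul_add, hQQ', mul_one]
  have e₃ : A * ((A + B)⁻¹ * B) = B * ((A + B)⁻¹ * A) :=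
    add_right_cancel (hx.trans hy.symm)
  simp only [mulVec_add, add_dotProduct, dotProduct_add, mulVec_sub, sub_dotProduct,
    dotProduct_sub, mulVec_mulVec, mv_dp hA, mv_dp hB, mul_assoc]
  have d₁ : m₁ ⬝ᵥ (A * ((A + B)⁻¹ * A)) *ᵥ m₁ + m₁ ⬝ᵥ (B * ((A + B)⁻¹ * A)) *ᵥ m₁
      = m₁ ⬝ᵥ A *ᵥ m₁ := by rw [← dotProduct_add, ← add_mulVec, hAA]
  have d₂ : m₂ ⬝ᵥ (B * ((A + B)⁻¹ * B)) *ᵥ m₂ + m₂ ⬝ᵥ (B * ((A + B)⁻¹ * A)) *ᵥ m₂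
      = m₂ ⬝ᵥ B *ᵥ m₂ := by rw [← dotProduct_add, ← add_mulVec, hBB]
  have d₃ : m₁ ⬝ᵥ (A * ((A + B)⁻¹ * B)) *ᵥ m₂ = m₁ ⬝ᵥ (B * ((A + B)⁻¹ * A)) *ᵥ m₂ := by
    rw [e₃]
  linarith [d₁, d₂, d₃]

lemma key (A B : Matrix (Fin n) (Fin n) ℝ) (hA : Aᵀ = A) (hB : Bᵀ = B)
    (hQ : IsUnit (A + B).det) (x m₁ m₂ : Fin n → ℝ) :
    (x - m₁) ⬝ᵥ A *ᵥ (x - m₁) + (x - m₂) ⬝ᵥ B *ᵥ (x - m₂)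
      = (x - (A + B)⁻¹ *ᵥ (A *ᵥ m₁ + B *ᵥ m₂)) ⬝ᵥ (A + B) *ᵥ
          (x - (A + B)⁻¹ *ᵥ (A *ᵥ m₁ + B *ᵥ m₂))
        + (m₁ - m₂) ⬝ᵥ (B * (A + B)⁻¹ * A) *ᵥ (m₁ - m₂) := by
  have hQQ : (A + B) * (A + B)⁻¹ = 1 := Matrix.mul_nonsing_inv _ hQ
  have hQt : (A + B)ᵀ = A + B := by rw [transpose_add, hA, hB]
  have hQit : ((A + B)⁻¹)ᵀ = (A + B)⁻¹ := by
    rw [Matrix.transpose_nonsing_inv, hQt]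
  set w := A *ᵥ m₁ + B *ᵥ m₂ with hw
  set c := (A + B)⁻¹ *ᵥ w with hc
  have hQc : (A + B) *ᵥ c = w := by rw [hc, mulVec_mulVec, hQQ, one_mulVec]
  have hq1 := quad_sub hA x m₁
  have hq2 := quad_sub hB x m₂
  have hq3 := quad_sub hQt x c
  have h4 : x ⬝ᵥ (A + B) *ᵥ x = x ⬝ᵥ A *ᵥ x + x ⬝ᵥ B *ᵥ x := by
    rw [add_mulVec, dotProduct_add]
  have h5 : x ⬝ᵥ (A + B) *ᵥ c = x ⬝ᵥ A *ᵥ m₁ + x ⬝ᵥ B *ᵥ m₂ := by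
    rw [hQc, hw, dotProduct_add]
  have h6 : c ⬝ᵥ (A + B) *ᵥ c = w ⬝ᵥ (A + B)⁻¹ *ᵥ w := by
    rw [hQc, hc, mv_dp hQit]
  have h7 := key0 A B hA hB hQ m₁ m₂
  rw [hq1, hq2, hq3, h4, h5, h6]
  linarith [h7]



/-- The Gaussian density `N(x; m, P)` on `ℝⁿ`. -/
noncomputable def gaussN {n : ℕ} (m : Fin n → ℝ) (P : Matrix (Fin n) (Fin n) ℝ)
    (x : Fin n → ℝ) : ℝ :=
  (((2 * Real.pi) • P).det) ^ (-(1 / 2 : ℝ)) *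
    Real.exp (-(1 / 2 : ℝ) * ((x - m) ⬝ᵥ (P⁻¹ *ᵥ (x - m))))

/-- product of weighted Gaussian components:
`α₁N(x; m₁, P₁) · α₂N(x; m₂, P₂) = α₁₂ N(x; m₁₂, P₁₂)` with
`P₁₂ = (P₁⁻¹ + P₂⁻¹)⁻¹`, `m₁₂ = P₁₂(P₁⁻¹m₁ + P₂⁻¹m₂)` and
`α₁₂ = α₁α₂ N(m₁ − m₂; 0, P₁ + P₂)`; moreover `P₁₂` and `P₁ + P₂` are
symmetric positive definite. -/
theorem mul_weighted_gaussian
    {n : ℕ} (hn : 1 ≤ n) (m₁ m₂ : Fin n → ℝ)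
    (P₁ P₂ : Matrix (Fin n) (Fin n) ℝ) (hP₁ : P₁.PosDef) (hP₂ : P₂.PosDef)
    (α₁ α₂ : ℝ) (hα₁ : 0 < α₁) (hα₂ : 0 < α₂)
    (P₁₂ : Matrix (Fin n) (Fin n) ℝ) (m₁₂ : Fin n → ℝ) (α₁₂ : ℝ)
    (hP₁₂ : P₁₂ = (P₁⁻¹ + P₂⁻¹)⁻¹)
    (hm₁₂ : m₁₂ = P₁₂ *ᵥ (P₁⁻¹ *ᵥ m₁ + P₂⁻¹ *ᵥ m₂))
    (hα₁₂ : α₁₂ = α₁ * α₂ * gaussN (0 : Fin n → ℝ) (P₁ + P₂) (m₁ - m₂)) :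
    P₁₂.PosDef ∧ (P₁ + P₂).PosDef ∧
    ∀ x : Fin n → ℝ,
      (α₁ * gaussN m₁ P₁ x) * (α₂ * gaussN m₂ P₂ x) = α₁₂ * gaussN m₁₂ P₁₂ x := by
  subst hα₁₂ hm₁₂ hP₁₂
  have hP₁u : IsUnit P₁.det := hP₁.det_pos.ne'.isUnit
  have hP₂u : IsUnit P₂.det := hP₂.det_pos.ne'.isUnit
  have hApd : (P₁⁻¹).PosDef := hP₁.inv
  have hBpd : (P₂⁻¹).PosDef := hP₂.inv
  have hQpd : (P₁⁻¹ + P₂⁻¹).PosDef := hApd.add hBpd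
  have hQu : IsUnit (P₁⁻¹ + P₂⁻¹).det := hQpd.det_pos.ne'.isUnit
  have hP12pd : ((P₁⁻¹ + P₂⁻¹)⁻¹).PosDef := hQpd.inv
  have hsumpd : (P₁ + P₂).PosDef := hP₁.add hP₂
  refine ⟨hP12pd, hsumpd, fun x => ?_⟩
  have hAt : (P₁⁻¹)ᵀ = P₁⁻¹ := by have h := hApd.isHermitian; simp at h; exact h
  have hBt : (P₂⁻¹)ᵀ = P₂⁻¹ := by have h := hBpd.isHermitian; simp at h; exact h
  have hfac : P₁ + P₂ = P₁ * (P₁⁻¹ + P₂⁻¹) * P₂ := by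
    rw [mul_add, Matrix.mul_nonsing_inv _ hP₁u, add_mul, one_mul, mul_assoc,
      Matrix.nonsing_inv_mul _ hP₂u, mul_one, add_comm]
  have hSinv : (P₁ + P₂)⁻¹ = P₂⁻¹ * (P₁⁻¹ + P₂⁻¹)⁻¹ * P₁⁻¹ := by
    rw [hfac, Matrix.mul_inv_rev, Matrix.mul_inv_rev, ← mul_assoc]
  have hdet : P₁.det * P₂.det = (P₁ + P₂).det * ((P₁⁻¹ + P₂⁻¹)⁻¹).det := by
    rw [hfac, det_mul, det_mul, Matrix.det_nonsing_inv, Ring.inverse_eq_inv']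
    have hc : (P₁⁻¹ + P₂⁻¹).det * ((P₁⁻¹ + P₂⁻¹).det)⁻¹ = 1 :=
      mul_inv_cancel₀ hQpd.det_pos.ne'
    linear_combination (-(P₁.det * P₂.det)) * hc
  have twopi : (0 : ℝ) < 2 * Real.pi := by positivity
  have det2pi : ∀ M : Matrix (Fin n) (Fin n) ℝ,
      ((2 * Real.pi) • M).det = (2 * Real.pi) ^ n * M.det := by
    intro M; rw [Matrix.det_smul, Fintype.card_fin]
  have p₁ : 0 < ((2 * Real.pi) • P₁).det := by
    rw [det2pi]; exact mul_pos (pow_pos twopi n) hP₁.det_pos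
  have p₂ : 0 < ((2 * Real.pi) • P₂).det := by
    rw [det2pi]; exact mul_pos (pow_pos twopi n) hP₂.det_pos
  have ps : 0 < ((2 * Real.pi) • (P₁ + P₂)).det := by
    rw [det2pi]; exact mul_pos (pow_pos twopi n) hsumpd.det_pos
  have p₁₂ : 0 < ((2 * Real.pi) • (P₁⁻¹ + P₂⁻¹)⁻¹).det := by
    rw [det2pi]; exact mul_pos (pow_pos twopi n) hP12pd.det_pos
  have hD : (((2 * Real.pi) • P₁).det) ^ (-(1/2 : ℝ)) * (((2 * Real.pi) • P₂).det) ^ (-(1/2 : ℝ))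
      = (((2 * Real.pi) • (P₁ + P₂)).det) ^ (-(1/2 : ℝ)) *
        (((2 * Real.pi) • (P₁⁻¹ + P₂⁻¹)⁻¹).det) ^ (-(1/2 : ℝ)) := by
    rw [← Real.mul_rpow p₁.le p₂.le, ← Real.mul_rpow ps.le p₁₂.le]
    congr 1
    rw [det2pi, det2pi, det2pi, det2pi]
    linear_combination ((2 * Real.pi) ^ n) ^ 2 * hdet
  have hkey := key P₁⁻¹ P₂⁻¹ hAt hBt hQu x m₁ m₂
  simp only [gaussN, sub_zero]
  rw [Matrix.nonsing_inv_nonsing_inv _ hQu, hSinv]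
  have hE : Real.exp (-(1/2 : ℝ) * ((x - m₁) ⬝ᵥ P₁⁻¹ *ᵥ (x - m₁))) *
        Real.exp (-(1/2 : ℝ) * ((x - m₂) ⬝ᵥ P₂⁻¹ *ᵥ (x - m₂)))
      = Real.exp (-(1/2 : ℝ) * ((m₁ - m₂) ⬝ᵥ (P₂⁻¹ * (P₁⁻¹ + P₂⁻¹)⁻¹ * P₁⁻¹) *ᵥ (m₁ - m₂))) *
        Real.exp (-(1/2 : ℝ) *
          ((x - (P₁⁻¹ + P₂⁻¹)⁻¹ *ᵥ (P₁⁻¹ *ᵥ m₁ + P₂⁻¹ *ᵥ m₂)) ⬝ᵥ (P₁⁻¹ + P₂⁻¹) *ᵥ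
            (x - (P₁⁻¹ + P₂⁻¹)⁻¹ *ᵥ (P₁⁻¹ *ᵥ m₁ + P₂⁻¹ *ᵥ m₂)))) := by
    rw [← Real.exp_add, ← Real.exp_add]
    congr 1
    linear_combination (-(1/2 : ℝ)) * hkey
  calc (α₁ * (((2 * Real.pi) • P₁).det ^ (-(1/2 : ℝ)) *
          Real.exp (-(1/2 : ℝ) * ((x - m₁) ⬝ᵥ P₁⁻¹ *ᵥ (x - m₁))))) *
        (α₂ * (((2 * Real.pi) • P₂).det ^ (-(1/2 : ℝ)) *
          Real.exp (-(1/2 : ℝ) * ((x - m₂) ⬝ᵥ P₂⁻¹ *ᵥ (x - m₂)))))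
      = (α₁ * α₂) * ((((2 * Real.pi) • P₁).det ^ (-(1/2 : ℝ)) *
          ((2 * Real.pi) • P₂).det ^ (-(1/2 : ℝ))) *
          (Real.exp (-(1/2 : ℝ) * ((x - m₁) ⬝ᵥ P₁⁻¹ *ᵥ (x - m₁))) *
           Real.exp (-(1/2 : ℝ) * ((x - m₂) ⬝ᵥ P₂⁻¹ *ᵥ (x - m₂))))) := by ring
    _ = _ := by rw [hD, hE]; ring
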